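/- For f ∈ C^1(ℝⁿ) (or f ∈ W^{1,p}_loc(ℝⁿ)) and every x ∈ ℝⁿ, MQf(x) ≤ 𝕄(|∇f|)(x), where MQf is the maximal mean difference quotient and 𝕄 is the centered Hardy–Littlewood maximal operator. -/

import Mathlib

open MeasureTheory Metric

/-- The maximal mean difference quotient (values in `ℝ≥0∞`). -/
noncomputable def MQ {n : ℕ} (f : EuclideanSpace ℝ (Fin n) → ℝ)
    (x : EuclideanSpace ℝ (Fin n)) : ENNReal :=
  ⨆ (r : ℝ) (_ : 0 < r),
    (volume (ball x r))⁻¹ *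
      ∫⁻ z in ball x r, ENNReal.ofReal (|f z - f x| / ‖z - x‖)

/-- The centered Hardy–Littlewood maximal function (values in `ℝ≥0∞`). -/
noncomputable def hlMax {n : ℕ} (g : EuclideanSpace ℝ (Fin n) → ℝ)
    (x : EuclideanSpace ℝ (Fin n)) : ENNReal :=
  ⨆ (r : ℝ) (_ : 0 < r),
    (volume (ball x r))⁻¹ * ∫⁻ z in ball x r, ENNReal.ofReal |g z|

/-- Fundamental theorem of calculus bound along segments. -/
lemma MQaux_ftc {n : ℕ} (f : EuclideanSpace ℝ (Fin n) → ℝ) (hf : ContDiff ℝ 1 f)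
    (x z : EuclideanSpace ℝ (Fin n)) :
    |f z - f x| ≤ ∫ t in (0:ℝ)..1, ‖fderiv ℝ f (x + t • (z - x))‖ * ‖z - x‖ := by
  have hcont : Continuous fun t : ℝ => (fderiv ℝ f (x + t • (z - x))) (z - x) := by
    have h1 : Continuous fun t : ℝ => x + t • (z - x) := by continuity
    exact ((hf.continuous_fderiv one_ne_zero).comp h1).clm_apply continuous_const
  have hderiv : ∀ t ∈ Set.uIcc (0:ℝ) 1,
      HasDerivAt (fun s : ℝ => f (x + s • (z - x)))
        ((fderiv ℝ f (x + t • (z - x))) (z - x)) t := by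
    intro t _
    have h1 : HasDerivAt (fun s : ℝ => x + s • (z - x)) (z - x) t := by
      simpa using ((hasDerivAt_id t).smul_const (z - x)).const_add x
    exact ((hf.differentiable one_ne_zero _).hasFDerivAt.comp_hasDerivAt t h1)
  have heq : f z - f x = ∫ t in (0:ℝ)..1, (fderiv ℝ f (x + t • (z - x))) (z - x) := by
    have := intervalIntegral.integral_eq_sub_of_hasDerivAt hderiv
      (hcont.intervalIntegrable 0 1)
    simpa using this.symm
  rw [heq]
  calc |∫ t in (0:ℝ)..1, (fderiv ℝ f (x + t • (z - x))) (z - x)|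
      ≤ ∫ t in (0:ℝ)..1, |(fderiv ℝ f (x + t • (z - x))) (z - x)| :=
        intervalIntegral.abs_integral_le_integral_abs zero_le_one
    _ ≤ ∫ t in (0:ℝ)..1, ‖fderiv ℝ f (x + t • (z - x))‖ * ‖z - x‖ := by
        apply intervalIntegral.integral_mono_on zero_le_one
          (hcont.abs.intervalIntegrable 0 1)
          (((((hf.continuous_fderiv one_ne_zero).comp (by continuity)).norm).mul
            continuous_const).intervalIntegrable 0 1)
        intro t _
        exact (fderiv ℝ f (x + t • (z - x))).le_opNorm (z - x)

/-- Pointwise bound of the difference quotient by a line integral of the gradient norm. -/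
lemma MQaux_ptwise {n : ℕ} (f : EuclideanSpace ℝ (Fin n) → ℝ) (hf : ContDiff ℝ 1 f)
    (x z : EuclideanSpace ℝ (Fin n)) :
    ENNReal.ofReal (|f z - f x| / ‖z - x‖) ≤
      ∫⁻ t in Set.Ioc (0:ℝ) 1, ENNReal.ofReal ‖fderiv ℝ f (x + t • (z - x))‖ := by
  have hGc : Continuous fun t : ℝ => ‖fderiv ℝ f (x + t • (z - x))‖ :=
    ((hf.continuous_fderiv one_ne_zero).comp (by continuity)).norm
  by_cases hz : z = x
  · simp [hz]
  have hnz : (0:ℝ) < ‖z - x‖ := by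
    rw [norm_pos_iff]; exact sub_ne_zero.mpr hz
  have h1 : |f z - f x| / ‖z - x‖ ≤ ∫ t in (0:ℝ)..1, ‖fderiv ℝ f (x + t • (z - x))‖ := by
    rw [div_le_iff₀ hnz]
    simpa [intervalIntegral.integral_mul_const] using MQaux_ftc f hf x z
  calc ENNReal.ofReal (|f z - f x| / ‖z - x‖)
      ≤ ENNReal.ofReal (∫ t in (0:ℝ)..1, ‖fderiv ℝ f (x + t • (z - x))‖) :=
        ENNReal.ofReal_le_ofReal h1
    _ = ∫⁻ t in Set.Ioc (0:ℝ) 1, ENNReal.ofReal ‖fderiv ℝ f (x + t • (z - x))‖ := by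
        rw [intervalIntegral.integral_of_le zero_le_one,
          ofReal_integral_eq_lintegral_ofReal (hGc.integrableOn_Ioc)
            (Filter.Eventually.of_forall fun t => norm_nonneg _)]

/-- Change of variables for the homothety `z ↦ x + t • (z - x)`. -/
lemma MQaux_cov {n : ℕ} (g : EuclideanSpace ℝ (Fin n) → ENNReal) (hg : Measurable g)
    (x : EuclideanSpace ℝ (Fin n)) {r t : ℝ} (ht : 0 < t) :
    ∫⁻ z in ball x r, g (x + t • (z - x)) =
      (ENNReal.ofReal (t ^ n))⁻¹ * ∫⁻ w in ball x (t * r), g w := by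
  set φ : EuclideanSpace ℝ (Fin n) → EuclideanSpace ℝ (Fin n) := fun z => x + t • (z - x)
    with hφdef
  have hφm : Measurable φ := by fun_prop
  have hφcomp : φ = (fun w => w + (x - t • x)) ∘ (fun z => t • z) := by
    funext z; simp only [hφdef, Function.comp_apply]
    module
  have hd : Module.finrank ℝ (EuclideanSpace ℝ (Fin n)) = n := finrank_euclideanSpace_fin
  have hmap : Measure.map φ volume =
      (ENNReal.ofReal (t ^ n))⁻¹ • (volume : Measure (EuclideanSpace ℝ (Fin n))) := by
    rw [hφcomp, ← Measure.map_map (measurable_add_const _) (measurable_const_smul t),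
      Measure.map_addHaar_smul volume ht.ne', hd, Measure.map_smul,
      map_add_right_eq_self]
    congr 1
    rw [abs_inv, abs_of_pos (pow_pos ht n), ENNReal.ofReal_inv_of_pos (pow_pos ht n)]
  have hpre : φ ⁻¹' ball x (t * r) = ball x r := by
    ext z
    simp only [Set.mem_preimage, mem_ball, dist_eq_norm, hφdef]
    have : x + t • (z - x) - x = t • (z - x) := by module
    rw [this, norm_smul, Real.norm_eq_abs, abs_of_pos ht]
    exact mul_lt_mul_iff_right₀ ht
  calc ∫⁻ z in ball x r, g (φ z) ∂volume
      = ∫⁻ y, g y ∂((volume.restrict (ball x r)).map φ) := (lintegral_map hg hφm).symm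
    _ = ∫⁻ y, g y ∂((Measure.map φ volume).restrict (ball x (t * r))) := by
        rw [Measure.restrict_map hφm measurableSet_ball, hpre]
    _ = (ENNReal.ofReal (t ^ n))⁻¹ * ∫⁻ w in ball x (t * r), g w := by
        rw [hmap, Measure.restrict_smul, lintegral_smul_measure, smul_eq_mul]

/-- For `f ∈ C¹(ℝⁿ)` and every `x`, the maximal mean difference quotient is dominated by
the centered Hardy–Littlewood maximal function of `|∇f|`: `MQf(x) ≤ 𝕄(|∇f|)(x)`. -/
theorem MQ_le_hlMax_gradient {n : ℕ}
    (f : EuclideanSpace ℝ (Fin n) → ℝ) (hf : ContDiff ℝ 1 f)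
    (x : EuclideanSpace ℝ (Fin n)) :
    MQ f x ≤ hlMax (fun z => ‖gradient f z‖) x := by
  set g : EuclideanSpace ℝ (Fin n) → ENNReal := fun w => ENNReal.ofReal ‖fderiv ℝ f w‖ with hgdef
  set M : ENNReal := hlMax (fun z => ‖gradient f z‖) x with hMdef
  have hgc : Continuous g := ENNReal.continuous_ofReal.comp (hf.continuous_fderiv one_ne_zero).norm
  have hgm : Measurable g := hgc.measurable
  -- the maximal function dominates each average of g
  have hM : ∀ s : ℝ, 0 < s → ∫⁻ w in ball x s, g w ≤ volume (ball x s) * M := by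
    intro s hs
    have h1 : (volume (ball x s))⁻¹ * ∫⁻ w in ball x s, g w ≤ M := by
      have : (volume (ball x s))⁻¹ *
          ∫⁻ z in ball x s, ENNReal.ofReal |‖gradient f z‖| ≤ M := by
        rw [hMdef, hlMax]
        exact le_iSup₂_of_le s hs le_rfl
      simpa [hgdef, abs_norm, (InnerProductSpace.toDual ℝ _).symm.norm_map, gradient] using this
    calc ∫⁻ w in ball x s, g w
        = volume (ball x s) * ((volume (ball x s))⁻¹ * ∫⁻ w in ball x s, g w) := by
          rw [← mul_assoc, ENNReal.mul_inv_cancel (measure_ball_pos _ _ hs).ne'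
            measure_ball_lt_top.ne, one_mul]
      _ ≤ volume (ball x s) * M := mul_le_mul_right h1 _
  rw [MQ]
  apply iSup₂_le
  intro r hr
  have hvol0 : volume (ball x r) ≠ 0 := (measure_ball_pos _ _ hr).ne'
  have hvoltop : volume (ball x r) ≠ ⊤ := measure_ball_lt_top.ne
  have key : ∫⁻ z in ball x r, ENNReal.ofReal (|f z - f x| / ‖z - x‖) ≤
      volume (ball x r) * M := by
    have step1 : ∫⁻ z in ball x r, ENNReal.ofReal (|f z - f x| / ‖z - x‖) ≤
        ∫⁻ z in ball x r, ∫⁻ t in Set.Ioc (0:ℝ) 1, g (x + t • (z - x)) :=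
      lintegral_mono fun z => MQaux_ptwise f hf x z
    have hGc2 : Continuous fun p : EuclideanSpace ℝ (Fin n) × ℝ =>
        g (x + p.2 • (p.1 - x)) := by
      apply hgc.comp
      fun_prop
    have step2 : ∫⁻ z in ball x r, ∫⁻ t in Set.Ioc (0:ℝ) 1, g (x + t • (z - x)) =
        ∫⁻ t in Set.Ioc (0:ℝ) 1, ∫⁻ z in ball x r, g (x + t • (z - x)) := by
      apply lintegral_lintegral_swap
      have : (Function.uncurry fun (z : EuclideanSpace ℝ (Fin n)) (t : ℝ) =>
          g (x + t • (z - x))) = fun p => g (x + p.2 • (p.1 - x)) := rfl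
      rw [this]
      exact hGc2.measurable.aemeasurable
    have step3 : ∫⁻ t in Set.Ioc (0:ℝ) 1, ∫⁻ z in ball x r, g (x + t • (z - x)) ≤
        ∫⁻ t in Set.Ioc (0:ℝ) 1, volume (ball x r) * M := by
      apply setLIntegral_mono (by fun_prop)
      intro t ht
      rw [MQaux_cov g hgm x ht.1]
      have hball : volume (ball x (t * r)) =
          ENNReal.ofReal (t ^ n) * volume (ball x r) := by
        rw [Measure.addHaar_ball_of_pos volume x (mul_pos ht.1 hr),
          Measure.addHaar_ball_of_pos volume x hr, finrank_euclideanSpace_fin, mul_pow,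
          ENNReal.ofReal_mul (pow_nonneg ht.1.le n), mul_assoc]
      calc (ENNReal.ofReal (t ^ n))⁻¹ * ∫⁻ w in ball x (t * r), g w
          ≤ (ENNReal.ofReal (t ^ n))⁻¹ * (volume (ball x (t * r)) * M) :=
            mul_le_mul_right (hM (t * r) (mul_pos ht.1 hr)) _
        _ = volume (ball x r) * M := by
            rw [hball, ← mul_assoc, ← mul_assoc,
              ENNReal.inv_mul_cancel (ENNReal.ofReal_pos.2 (pow_pos ht.1 n)).ne' ENNReal.ofReal_ne_top, one_mul]
    have step4 : ∫⁻ _ in Set.Ioc (0:ℝ) 1, volume (ball x r) * M = volume (ball x r) * M := by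
      rw [setLIntegral_const, Real.volume_Ioc]
      norm_num
    calc ∫⁻ z in ball x r, ENNReal.ofReal (|f z - f x| / ‖z - x‖)
        ≤ ∫⁻ t in Set.Ioc (0:ℝ) 1, ∫⁻ z in ball x r, g (x + t • (z - x)) :=
          step1.trans_eq step2
      _ ≤ volume (ball x r) * M := step3.trans_eq step4
  calc (volume (ball x r))⁻¹ * ∫⁻ z in ball x r, ENNReal.ofReal (|f z - f x| / ‖z - x‖)
      ≤ (volume (ball x r))⁻¹ * (volume (ball x r) * M) := mul_le_mul_right key _
    _ = M := by rw [← mul_assoc, ENNReal.inv_mul_cancel hvol0 hvoltop, one_mul]
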